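/- Let n ≥ 2 and let P, Q be monic hyperbolic polynomials of degree n such that the roots of Q are majorized by the roots of P. Then the roots of n⁻¹Q′ are majorized by the roots of n⁻¹P′ (as (n−1)-tuples); i.e., differentiation preserves the spectral order on monic hyperbolic polynomials. -/

import Mathlib

open Polynomial Finset

/-- Classical majorization of `n`-tuples via convex functions. -/
def MajorizedOn (n : ℕ) (x y : ℕ → ℝ) : Prop :=
  ∀ f : ℝ → ℝ, ConvexOn ℝ Set.univ f →
    ∑ i ∈ Finset.range n, f (x i) ≤ ∑ i ∈ Finset.range n, f (y i)

open Matrix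

namespace SpecPre

variable (m : ℕ)

noncomputable def cc : ℝ := (Real.sqrt (m + 1))⁻¹

noncomputable def ww : Fin (m + 1) → ℝ := fun i => (if i = 0 then (1 : ℝ) else 0) - cc m

noncomputable def kk : ℝ := (1 - cc m)⁻¹

noncomputable def U : Matrix (Fin (m + 1)) (Fin (m + 1)) ℝ :=
  Matrix.of fun i j => (if i = j then (1 : ℝ) else 0) - kk m * (ww m i * ww m j)

lemma sqrt_pos : 0 < Real.sqrt (m + 1) := by
  apply Real.sqrt_pos.2; positivity

lemma cc_pos : 0 < cc m := by
  have := sqrt_pos m; simp [cc]; positivity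

lemma cc_sq : (m + 1 : ℝ) * cc m ^ 2 = 1 := by
  have h : Real.sqrt (m + 1) ^ 2 = (m + 1 : ℝ) := Real.sq_sqrt (by positivity)
  have h0 : Real.sqrt (m + 1) ≠ 0 := ne_of_gt (sqrt_pos m)
  rw [cc, inv_pow, h, mul_inv_cancel₀ (by positivity)]


lemma cc_lt_one (hm : 1 ≤ m) : cc m < 1 := by
  rw [cc, inv_lt_one_iff₀]
  right
  have : (2 : ℝ) ≤ (m + 1 : ℝ) := by
    have : (1:ℝ) ≤ (m:ℝ) := by exact_mod_cast hm
    linarith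
  calc (1:ℝ) < Real.sqrt 2 := by
        nlinarith [Real.sq_sqrt (by norm_num : (0:ℝ) ≤ 2), Real.sqrt_nonneg 2]
    _ ≤ Real.sqrt (m + 1) := Real.sqrt_le_sqrt this

lemma kk_mul (hm : 1 ≤ m) : kk m * (1 - cc m) = 1 := by
  have := cc_lt_one m hm
  rw [kk, inv_mul_cancel₀]
  intro h; linarith

lemma sum_sq_ww : ∑ i, ww m i ^ 2 = 2 - 2 * cc m := by
  have h : ∀ i : Fin (m + 1), ww m i ^ 2
      = ((if i = 0 then (1 : ℝ) else 0) - 2 * cc m * (if i = 0 then 1 else 0)) + cc m ^ 2 := by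
    intro i; by_cases h : i = 0 <;> simp [ww, h] <;> ring
  rw [Finset.sum_congr rfl fun i _ => h i, Finset.sum_add_distrib, Finset.sum_sub_distrib]
  rw [Finset.sum_ite_eq' univ (0 : Fin (m+1)) (fun _ => (1:ℝ))]
  rw [← Finset.mul_sum, Finset.sum_ite_eq' univ (0 : Fin (m+1)) (fun _ => (1:ℝ))]
  simp only [Finset.mem_univ, if_true, Finset.sum_const, Finset.card_univ, Fintype.card_fin,
    nsmul_eq_mul]
  have := cc_sq m
  have : ((m : ℝ) + 1) * cc m ^ 2 = 1 := by exact_mod_cast this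
  push_cast
  nlinarith [this]

lemma U_symm (i j : Fin (m + 1)) : U m i j = U m j i := by
  by_cases h : i = j
  · simp [U, h]
  · simp only [U, Matrix.of_apply, if_neg h, if_neg (Ne.symm h)]; ring

lemma U_mul_U (hm : 1 ≤ m) : U m * U m = 1 := by
  ext i j
  have hsum : ∑ k, ww m k ^ 2 = 2 - 2 * cc m := sum_sq_ww m
  have hk := kk_mul m hm
  rw [Matrix.mul_apply]
  have expand : ∀ k, U m i k * U m k j
      = ((if i = k then (1:ℝ) else 0) * (if k = j then (1:ℝ) else 0))
        - kk m * (ww m k * ww m j) * (if i = k then (1:ℝ) else 0)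
        - kk m * (ww m i * ww m k) * (if k = j then (1:ℝ) else 0)
        + (kk m * ww m i * ww m j * kk m) * ww m k ^ 2 := by
    intro k; simp only [U, Matrix.of_apply]; ring
  rw [Finset.sum_congr rfl fun k _ => expand k]
  rw [Finset.sum_add_distrib, Finset.sum_sub_distrib, Finset.sum_sub_distrib, ← Finset.mul_sum,
    hsum]
  have e1 : ∑ k, (if i = k then (1:ℝ) else 0) * (if k = j then (1:ℝ) else 0)
      = if i = j then 1 else 0 := by
    rw [Finset.sum_eq_single i] <;> simp +contextual [eq_comm]
  have e2 : ∑ k, kk m * (ww m k * ww m j) * (if i = k then (1:ℝ) else 0)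
      = kk m * (ww m i * ww m j) := by
    rw [Finset.sum_eq_single i] <;> simp +contextual [eq_comm]
  have e3 : ∑ k, kk m * (ww m i * ww m k) * (if k = j then (1:ℝ) else 0)
      = kk m * (ww m i * ww m j) := by
    rw [Finset.sum_eq_single j] <;> simp +contextual [eq_comm]
  rw [e1, e2, e3, Matrix.one_apply]
  have h2 : kk m * (2 - 2 * cc m) = 2 := by
    have e : (2 : ℝ) - 2 * cc m = 2 * (1 - cc m) := by ring
    rw [e, mul_comm (2:ℝ) (1 - cc m), ← mul_assoc, hk]; ring
  have : kk m * ww m i * ww m j * kk m * (2 - 2 * cc m)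
      = (kk m * (2 - 2 * cc m)) * (kk m * (ww m i * ww m j)) := by ring
  rw [this, h2]
  ring_nf

lemma U_col0 (hm : 1 ≤ m) (i : Fin (m + 1)) : U m i 0 = cc m := by
  have hk := kk_mul m hm
  have hw0 : ww m 0 = 1 - cc m := by simp [ww]
  simp only [U, Matrix.of_apply, hw0]
  have : kk m * (ww m i * (1 - cc m)) = ww m i := by
    rw [show kk m * (ww m i * (1 - cc m)) = (kk m * (1 - cc m)) * ww m i from by ring, hk, one_mul]
  rw [this]
  by_cases h : i = 0 <;> simp [ww, h]

lemma U_row0 (hm : 1 ≤ m) (i : Fin (m + 1)) : U m 0 i = cc m := by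
  rw [U_symm]; exact U_col0 m hm i

noncomputable def B (z : Fin (m + 1) → ℝ) : Matrix (Fin m) (Fin m) ℝ :=
  Matrix.of fun k l => ∑ i, z i * (U m i k.succ * U m i l.succ)

variable {m}

lemma B_herm (z : Fin (m + 1) → ℝ) : (B m z).IsHermitian := by
  ext k l
  simp only [Matrix.conjTranspose_apply, B, Matrix.of_apply, star_trivial]
  exact Finset.sum_congr rfl fun i _ => by ring

lemma VtV (hm : 1 ≤ m) (k l : Fin m) :
    ∑ i, U m i k.succ * U m i l.succ = if k = l then (1 : ℝ) else 0 := by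
  have h := congrFun (congrFun (U_mul_U m hm) k.succ) l.succ
  rw [Matrix.mul_apply] at h
  have e : ∀ i, U m k.succ i * U m i l.succ = U m i k.succ * U m i l.succ :=
    fun i => by rw [U_symm m k.succ i]
  rw [Finset.sum_congr rfl fun i _ => e i] at h
  rw [h, Matrix.one_apply]
  simp [Fin.succ_inj]

lemma G_entry (d : Fin (m + 1) → ℝ) (p q : Fin (m + 1)) :
    (U m * Matrix.diagonal d * U m) p q = ∑ j, d j * (U m j p * U m j q) := by
  rw [Matrix.mul_apply]
  refine Finset.sum_congr rfl fun j _ => ?_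
  rw [Matrix.mul_diagonal, ← U_symm m p j]
  ring

lemma G_submatrix (hm : 1 ≤ m) (z : Fin (m + 1) → ℝ) (t : ℝ) :
    (U m * Matrix.diagonal (fun i => t - z i) * U m).submatrix Fin.succ Fin.succ
      = t • (1 : Matrix (Fin m) (Fin m) ℝ) - B m z := by
  ext k l
  rw [Matrix.submatrix_apply, G_entry]
  simp only [Matrix.sub_apply, Matrix.smul_apply, B, Matrix.of_apply, smul_eq_mul]
  rw [show ∀ a b : Fin m, (1 : Matrix (Fin m) (Fin m) ℝ) a b = if a = b then (1:ℝ) else 0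
    from fun a b => rfl]
  rw [← VtV hm k l, Finset.mul_sum, ← Finset.sum_sub_distrib]
  exact Finset.sum_congr rfl fun i _ => by ring

lemma adjugate_00 (A : Matrix (Fin (m + 1)) (Fin (m + 1)) ℝ) :
    Matrix.adjugate A 0 0 = (A.submatrix Fin.succ Fin.succ).det := by
  rw [Matrix.adjugate_apply, Matrix.det_succ_row_zero]
  rw [Finset.sum_eq_single 0]
  · simp only [Matrix.updateRow_self, Pi.single_eq_same, Fin.val_zero, pow_zero, one_mul]
    refine congrArg Matrix.det ?_
    ext k l
    simp only [Matrix.submatrix_apply, Fin.zero_succAbove, Matrix.updateRow_apply,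
      if_neg (Fin.succ_ne_zero k)]
  · intro j _ hj
    simp [Matrix.updateRow_self, Pi.single_eq_of_ne hj]
  · intro h; exact absurd (Finset.mem_univ _) h

lemma det_U_sq (hm : 1 ≤ m) : (U m).det * (U m).det = 1 := by
  rw [← Matrix.det_mul, U_mul_U m hm, Matrix.det_one]

lemma star_pointwise (hm : 1 ≤ m) (z : Fin (m + 1) → ℝ) (t : ℝ) (ht : ∀ i, t ≠ z i) :
    (t • (1 : Matrix (Fin m) (Fin m) ℝ) - B m z).det
      = (∑ i, ∏ j ∈ Finset.univ.erase i, (t - z j)) / (m + 1) := by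
  set M : Matrix (Fin (m+1)) (Fin (m+1)) ℝ := Matrix.diagonal (fun i => t - z i) with hM
  set N : Matrix (Fin (m+1)) (Fin (m+1)) ℝ := Matrix.diagonal (fun i => (t - z i)⁻¹) with hN
  have hz : ∀ i, t - z i ≠ 0 := fun i => sub_ne_zero_of_ne (ht i)
  have hMN : M * N = 1 := by
    rw [hM, hN, Matrix.diagonal_mul_diagonal]
    rw [show (fun i => (t - z i) * (t - z i)⁻¹) = fun _ => (1:ℝ) from
      funext fun i => mul_inv_cancel₀ (hz i)]
    exact Matrix.diagonal_one
  set G := U m * M * U m with hG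
  set H := U m * N * U m with hH
  have hU := U_mul_U m hm
  have hHG : H * G = 1 := by
    rw [hH, hG]
    calc U m * N * U m * (U m * M * U m) = U m * (N * ((U m * U m) * M)) * U m := by
          simp only [Matrix.mul_assoc]
      _ = U m * (N * M) * U m := by rw [hU, Matrix.one_mul]
      _ = U m * (M * N) * U m := by
          have : N * M = M * N := by
            rw [hM, hN, Matrix.diagonal_mul_diagonal, Matrix.diagonal_mul_diagonal]
            have e : (fun i => (t - z i)⁻¹ * (t - z i)) = fun i => (t - z i) * (t - z i)⁻¹ :=
              funext fun i => mul_comm _ _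
            rw [e]
          rw [this]
      _ = 1 := by rw [hMN, Matrix.mul_one, hU]
  have hadj : Matrix.adjugate G = G.det • H := by
    calc Matrix.adjugate G = (H * G) * Matrix.adjugate G := by rw [hHG, Matrix.one_mul]
      _ = H * (G * Matrix.adjugate G) := by rw [Matrix.mul_assoc]
      _ = H * (G.det • 1) := by rw [Matrix.mul_adjugate]
      _ = G.det • H := by rw [Matrix.mul_smul, Matrix.mul_one]
  have hdetG : G.det = ∏ i, (t - z i) := by
    rw [hG, Matrix.det_mul, Matrix.det_mul, hM, Matrix.det_diagonal]
    rw [show (U m).det * (∏ i, (t - z i)) * (U m).det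
      = ((U m).det * (U m).det) * ∏ i, (t - z i) from by ring, det_U_sq hm, one_mul]
  have hH00 : H 0 0 = (cc m)^2 * ∑ i, (t - z i)⁻¹ := by
    rw [hH, G_entry, Finset.mul_sum]
    refine Finset.sum_congr rfl fun j _ => ?_
    rw [U_col0 m hm j]
    ring
  have key : (t • (1 : Matrix (Fin m) (Fin m) ℝ) - B m z).det = G.det * H 0 0 := by
    rw [← G_submatrix hm z t, ← adjugate_00, hadj, Matrix.smul_apply, smul_eq_mul]
  rw [key, hdetG, hH00]
  have hcc : (cc m)^2 = ((m : ℝ) + 1)⁻¹ := by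
    have h := cc_sq m
    field_simp
    nlinarith [h]
  rw [hcc, Finset.mul_sum, Finset.sum_div]
  rw [Finset.mul_sum]
  refine Finset.sum_congr rfl fun i _ => ?_
  have hpe : (∏ j ∈ Finset.univ.erase i, (t - z j)) * (t - z i) = ∏ j, (t - z j) :=
    Finset.prod_erase_mul _ _ (Finset.mem_univ i)
  have : (∏ j, (t - z j)) * (t - z i)⁻¹ = ∏ j ∈ Finset.univ.erase i, (t - z j) := by
    rw [← hpe, mul_assoc, mul_inv_cancel₀ (hz i), mul_one]
  rw [show (∏ j, (t - z j)) * (((m:ℝ)+1)⁻¹ * (t - z i)⁻¹)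
    = ((m:ℝ)+1)⁻¹ * ((∏ j, (t - z j)) * (t - z i)⁻¹) from by ring, this,
    div_eq_mul_inv, mul_comm]

lemma derivative_prod_linear (s : Finset (Fin (m + 1))) (z : Fin (m + 1) → ℝ) :
    derivative (∏ i ∈ s, (X - C (z i))) = ∑ i ∈ s, ∏ j ∈ s.erase i, (X - C (z j)) := by
  induction s using Finset.induction_on with
  | empty => simp
  | @insert a s ha ih =>
    rw [Finset.prod_insert ha, derivative_mul, ih, Finset.sum_insert ha, Finset.erase_insert ha]
    simp only [derivative_sub, derivative_X, derivative_C, sub_zero, one_mul]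
    rw [Finset.mul_sum]
    congr 1
    refine Finset.sum_congr rfl fun i hi => ?_
    have hne : a ≠ i := fun h => ha (h ▸ hi)
    rw [Finset.erase_insert_of_ne hne]
    rw [Finset.prod_insert (fun h => ha (Finset.mem_of_mem_erase h))]

lemma det_smul_one_sub (S : Matrix (Fin m) (Fin m) ℝ) (hS : S.IsHermitian) (t : ℝ) :
    (t • (1 : Matrix (Fin m) (Fin m) ℝ) - S).det = ∏ k, (t - hS.eigenvalues k) := by
  set W : Matrix (Fin m) (Fin m) ℝ := (hS.eigenvectorUnitary : Matrix (Fin m) (Fin m) ℝ) with hW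
  have h1 : W * star W = 1 := hS.eigenvectorUnitary.prop.2
  have hofReal : (RCLike.ofReal ∘ hS.eigenvalues : Fin m → ℝ) = hS.eigenvalues := rfl
  have key : t • (1 : Matrix (Fin m) (Fin m) ℝ) - S
      = W * (t • 1 - Matrix.diagonal hS.eigenvalues) * star W := by
    rw [Matrix.mul_sub, Matrix.sub_mul]
    rw [Matrix.mul_smul, Matrix.smul_mul, Matrix.mul_one, h1]
    conv_lhs => rw [hS.spectral_theorem]
    rw [hofReal, hW]
    rw [Unitary.conjStarAlgAut_apply]
  rw [key, Matrix.det_mul, Matrix.det_mul]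
  have hd : t • (1 : Matrix (Fin m) (Fin m) ℝ) - Matrix.diagonal hS.eigenvalues
      = Matrix.diagonal (fun k => t - hS.eigenvalues k) := by
    rw [Matrix.smul_one_eq_diagonal, Matrix.diagonal_sub]
  rw [hd, Matrix.det_diagonal]
  rw [show W.det * (∏ k, (t - hS.eigenvalues k)) * (star W).det
    = (W.det * (star W).det) * ∏ k, (t - hS.eigenvalues k) from by ring]
  rw [← Matrix.det_mul, h1, Matrix.det_one, one_mul]

noncomputable def eig (z : Fin (m + 1) → ℝ) : Fin m → ℝ := (B_herm z).eigenvalues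

lemma star_poly (hm : 1 ≤ m) (z : Fin (m + 1) → ℝ) :
    ∏ k, (X - C (eig z k)) = C ((m : ℝ) + 1)⁻¹ * derivative (∏ i, (X - C (z i))) := by
  have heval : ∀ t : ℝ, (∀ i, t ≠ z i) →
      eval t (∏ k, (X - C (eig z k)))
        = eval t (C ((m : ℝ) + 1)⁻¹ * derivative (∏ i, (X - C (z i)))) := by
    intro t ht
    rw [eval_mul, eval_C, Polynomial.eval_prod]
    simp only [eval_sub, eval_X, eval_C]
    have h1 : ∏ k, (t - eig z k) = (t • (1 : Matrix (Fin m) (Fin m) ℝ) - B m z).det :=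
      (det_smul_one_sub (B m z) (B_herm z) t).symm
    rw [h1, star_pointwise hm z t ht, derivative_prod_linear Finset.univ z,
      Polynomial.eval_finset_sum]
    simp only [Polynomial.eval_prod, eval_sub, eval_X, eval_C]
    rw [div_eq_mul_inv, mul_comm]
  have hzero : (∏ k, (X - C (eig z k)))
      - C ((m : ℝ) + 1)⁻¹ * derivative (∏ i, (X - C (z i))) = 0 := by
    apply Polynomial.eq_zero_of_infinite_isRoot
    apply Set.Infinite.mono (s := (Set.range z)ᶜ)
    · intro t htr
      simp only [Set.mem_setOf_eq, IsRoot, eval_sub]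
      rw [heval t (fun i h => htr ⟨i, h.symm⟩), sub_self]
    · exact (Set.finite_range z).infinite_compl
  exact sub_eq_zero.mp hzero

lemma sq_row_sum (Q : Matrix (Fin m) (Fin m) ℝ) (hQ : Q * star Q = 1) (k : Fin m) :
    ∑ j, (Q k j) ^ 2 = 1 := by
  have h := congrFun (congrFun hQ k) k
  rw [Matrix.mul_apply] at h
  rw [show (1 : Matrix (Fin m) (Fin m) ℝ) k k = 1 from by simp [Matrix.one_apply]] at h
  rw [← h]
  exact Finset.sum_congr rfl fun j _ => by
    rw [Matrix.star_apply, star_trivial]; ring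

lemma peierls (g : ℝ → ℝ) (hg : ConvexOn ℝ Set.univ g)
    (S : Matrix (Fin m) (Fin m) ℝ) (hS : S.IsHermitian)
    (O : Matrix (Fin m) (Fin m) ℝ) (hO1 : star O * O = 1) (hO2 : O * star O = 1) :
    ∑ k, g ((star O * S * O) k k) ≤ ∑ k, g (hS.eigenvalues k) := by
  set W : Matrix (Fin m) (Fin m) ℝ := (hS.eigenvectorUnitary : Matrix (Fin m) (Fin m) ℝ) with hW
  have hW1 : W * star W = 1 := hS.eigenvectorUnitary.prop.2
  have hW2 : star W * W = 1 := hS.eigenvectorUnitary.prop.1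
  set Q : Matrix (Fin m) (Fin m) ℝ := star O * W with hQdef
  have hQ1 : Q * star Q = 1 := by
    rw [hQdef, Matrix.star_mul, star_star, Matrix.mul_assoc, ← Matrix.mul_assoc W _ _, hW1,
      Matrix.one_mul, hO1]
  have hQ2 : star Q * Q = 1 := by
    rw [hQdef, Matrix.star_mul, star_star, Matrix.mul_assoc, ← Matrix.mul_assoc O _ _, hO2,
      Matrix.one_mul, hW2]
  have hofReal : (RCLike.ofReal ∘ hS.eigenvalues : Fin m → ℝ) = hS.eigenvalues := rfl
  have hentry : ∀ k, (star O * S * O) k k = ∑ j, (Q k j) ^ 2 * hS.eigenvalues j := by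
    intro k
    have hSOW : star O * S * O = Q * Matrix.diagonal hS.eigenvalues * star Q := by
      conv_lhs => rw [hS.spectral_theorem]
      rw [hofReal, hQdef, Matrix.star_mul, star_star]
      simp only [Matrix.mul_assoc, hW, Unitary.conjStarAlgAut_apply]
    rw [hSOW, Matrix.mul_apply]
    refine Finset.sum_congr rfl fun j _ => ?_
    rw [Matrix.mul_diagonal, Matrix.star_apply, star_trivial]
    ring
  calc ∑ k, g ((star O * S * O) k k)
      = ∑ k, g (∑ j, (Q k j) ^ 2 * hS.eigenvalues j) := by
        exact Finset.sum_congr rfl fun k _ => by rw [hentry k]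
    _ ≤ ∑ k, ∑ j, (Q k j) ^ 2 * g (hS.eigenvalues j) := by
        refine Finset.sum_le_sum fun k _ => ?_
        have := hg.map_sum_le (t := Finset.univ) (w := fun j => (Q k j) ^ 2)
          (p := fun j => hS.eigenvalues j) (fun j _ => sq_nonneg _)
          (sq_row_sum Q hQ1 k) (fun j _ => Set.mem_univ _)
        simpa [smul_eq_mul] using this
    _ = ∑ j, (∑ k, (Q k j) ^ 2) * g (hS.eigenvalues j) := by
        rw [Finset.sum_comm]
        exact Finset.sum_congr rfl fun j _ => by rw [Finset.sum_mul]
    _ = ∑ j, g (hS.eigenvalues j) := by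
        refine Finset.sum_congr rfl fun j _ => ?_
        have hcol : ∑ k, (Q k j) ^ 2 = 1 := by
          have h := congrFun (congrFun hQ2 j) j
          rw [Matrix.mul_apply] at h
          rw [show (1 : Matrix (Fin m) (Fin m) ℝ) j j = 1 from by simp [Matrix.one_apply]] at h
          rw [← h]
          exact Finset.sum_congr rfl fun k _ => by
            rw [Matrix.star_apply, star_trivial]; ring
        rw [hcol, one_mul]

lemma B_comb (a b : ℝ) (z z' : Fin (m + 1) → ℝ) :
    B m (a • z + b • z') = a • B m z + b • B m z' := by
  ext k l
  simp only [B, Matrix.of_apply, Pi.add_apply, Pi.smul_apply, smul_eq_mul, Matrix.add_apply,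
    Matrix.smul_apply]
  rw [Finset.mul_sum, Finset.mul_sum, ← Finset.sum_add_distrib]
  exact Finset.sum_congr rfl fun i _ => by ring

lemma eig_sum_convex (g : ℝ → ℝ) (hg : ConvexOn ℝ Set.univ g) :
    ConvexOn ℝ Set.univ (fun z : Fin (m + 1) → ℝ => ∑ k, g (eig z k)) := by
  refine ⟨convex_univ, fun z _ z' _ a b ha hb hab => ?_⟩
  set M := B m (a • z + b • z') with hM
  have hMh : M.IsHermitian := B_herm _
  set W : Matrix (Fin m) (Fin m) ℝ := (hMh.eigenvectorUnitary : Matrix (Fin m) (Fin m) ℝ)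
    with hWdef
  have hW1 : W * star W = 1 := hMh.eigenvectorUnitary.prop.2
  have hW2 : star W * W = 1 := hMh.eigenvectorUnitary.prop.1
  have hdiag : star W * M * W = Matrix.diagonal (hMh.eigenvalues) := by
    have := hMh.conjStarAlgAut_star_eigenvectorUnitary; rw [Unitary.conjStarAlgAut_star_apply] at this
    exact this
  have hlin : star W * M * W = a • (star W * B m z * W) + b • (star W * B m z' * W) := by
    rw [hM, B_comb, Matrix.mul_add, Matrix.add_mul, Matrix.mul_smul, Matrix.mul_smul,
      Matrix.smul_mul, Matrix.smul_mul]
  have heig : ∀ k, eig (a • z + b • z') k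
      = a * (star W * B m z * W) k k + b * (star W * B m z' * W) k k := by
    intro k
    have h1 : Matrix.diagonal (hMh.eigenvalues) k k = hMh.eigenvalues k := by
      simp [Matrix.diagonal_apply_eq]
    have h2 := congrFun (congrFun (hdiag.symm.trans hlin) k) k
    rw [h1] at h2
    show hMh.eigenvalues k = _
    simpa [Matrix.add_apply, Matrix.smul_apply, smul_eq_mul] using h2
  have step1 : ∀ k, g (eig (a • z + b • z') k)
      ≤ a * g ((star W * B m z * W) k k) + b * g ((star W * B m z' * W) k k) := by
    intro k
    rw [heig k]
    have := hg.2 (Set.mem_univ ((star W * B m z * W) k k))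
      (Set.mem_univ ((star W * B m z' * W) k k)) ha hb hab
    simpa [smul_eq_mul] using this
  calc ∑ k, g (eig (a • z + b • z') k)
      ≤ ∑ k, (a * g ((star W * B m z * W) k k) + b * g ((star W * B m z' * W) k k)) :=
        Finset.sum_le_sum fun k _ => step1 k
    _ = a * ∑ k, g ((star W * B m z * W) k k) + b * ∑ k, g ((star W * B m z' * W) k k) := by
        rw [Finset.sum_add_distrib, Finset.mul_sum, Finset.mul_sum]
    _ ≤ a * ∑ k, g (eig z k) + b * ∑ k, g (eig z' k) := by
        have p1 := peierls g hg (B m z) (B_herm z) W hW2 hW1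
        have p2 := peierls g hg (B m z') (B_herm z') W hW2 hW1
        have := add_le_add (mul_le_mul_of_nonneg_left p1 ha)
          (mul_le_mul_of_nonneg_left p2 hb)
        simpa [eig] using this
    _ = a • (fun w => ∑ k, g (eig w k)) z + b • (fun w => ∑ k, g (eig w k)) z' := by
        simp [smul_eq_mul]

/-! ### Hypothesis side: from convex majorization to the permutation hull -/

lemma convexOn_hinge (t : ℝ) : ConvexOn ℝ Set.univ (fun s : ℝ => max (t - s) 0) := by
  refine ⟨convex_univ, fun p _ q _ a b ha hb hab => ?_⟩
  simp only [smul_eq_mul]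
  apply max_le
  · have h1 : t - (a * p + b * q) = a * (t - p) + b * (t - q) := by
      linear_combination (-t) * hab
    rw [h1]
    exact add_le_add (mul_le_mul_of_nonneg_left (le_max_left _ _) ha)
      (mul_le_mul_of_nonneg_left (le_max_left _ _) hb)
  · exact add_nonneg (mul_nonneg ha (le_max_right _ _)) (mul_nonneg hb (le_max_right _ _))

lemma dite_sum {n : ℕ} (F : Fin n → ℝ) :
    ∑ j ∈ Finset.range n, (if h : j < n then F ⟨j, h⟩ else 0) = ∑ i : Fin n, F i := by
  rw [← Fin.sum_univ_eq_sum_range]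
  exact Finset.sum_congr rfl fun i _ => by simp

lemma abel_le {n : ℕ} (A Yv Xv : ℕ → ℝ)
    (hA : ∀ i, i + 1 < n → A i ≤ A (i + 1))
    (hpart : ∀ k, k ≤ n → ∑ j ∈ Finset.range k, Xv j ≤ ∑ j ∈ Finset.range k, Yv j)
    (htot : ∑ j ∈ Finset.range n, Yv j = ∑ j ∈ Finset.range n, Xv j) :
    ∑ j ∈ Finset.range n, A j * Yv j ≤ ∑ j ∈ Finset.range n, A j * Xv j := by
  rcases Nat.eq_zero_or_pos n with hn | hn
  · simp [hn]
  have key : ∑ j ∈ Finset.range n, A j * (Yv j - Xv j) ≤ 0 := by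
    have hparts := Finset.sum_range_by_parts (f := A) (g := fun j => Yv j - Xv j) n
    simp only [smul_eq_mul] at hparts
    rw [hparts]
    have hGn : ∑ i ∈ Finset.range n, (Yv i - Xv i) = 0 := by
      rw [Finset.sum_sub_distrib, htot, sub_self]
    rw [hGn, mul_zero, zero_sub, neg_nonpos]
    refine Finset.sum_nonneg fun i hi => ?_
    rw [Finset.mem_range] at hi
    have hi1 : i + 1 < n := by omega
    refine mul_nonneg (by linarith [hA i hi1]) ?_
    rw [Finset.sum_sub_distrib, sub_nonneg]
    exact hpart (i + 1) (by omega)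
  have expand : ∑ j ∈ Finset.range n, A j * (Yv j - Xv j)
      = ∑ j ∈ Finset.range n, A j * Yv j - ∑ j ∈ Finset.range n, A j * Xv j := by
    rw [← Finset.sum_sub_distrib]
    exact Finset.sum_congr rfl fun j _ => by ring
  linarith [key, expand.symm.trans_le key]

lemma dot_le_perm {n : ℕ} (x y : Fin n → ℝ)
    (hsum : ∑ i, y i = ∑ i, x i)
    (hpl : ∀ t : ℝ, ∑ i, max (t - y i) 0 ≤ ∑ i, max (t - x i) 0)
    (a : Fin n → ℝ) :
    ∃ σ : Equiv.Perm (Fin n), ∑ i, a i * y i ≤ ∑ i, a i * x (σ i) := by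
  classical
  set π := Tuple.sort y with hπ
  set τ := Tuple.sort x with hτ
  set ρ := Tuple.sort a with hρ
  set A' : ℕ → ℝ := fun j => if h : j < n then a (ρ ⟨j, h⟩) else 0 with hA'
  set X' : ℕ → ℝ := fun j => if h : j < n then x (τ ⟨j, h⟩) else 0 with hX'
  set Y' : ℕ → ℝ := fun j => if h : j < n then y (π ⟨j, h⟩) else 0 with hY'
  have hXmono : ∀ i j, i ≤ j → j < n → X' i ≤ X' j := by
    intro i j hij hjn
    have := Tuple.monotone_sort x (a := (⟨i, lt_of_le_of_lt hij hjn⟩ : Fin n))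
      (b := (⟨j, hjn⟩ : Fin n)) hij
    simpa [hX', dif_pos (lt_of_le_of_lt hij hjn), dif_pos hjn] using this
  have hAmono : ∀ i, i + 1 < n → A' i ≤ A' (i + 1) := by
    intro i hi
    have := Tuple.monotone_sort a (a := (⟨i, by omega⟩ : Fin n))
      (b := (⟨i + 1, hi⟩ : Fin n)) (by simp)
    simpa [hA', dif_pos hi, dif_pos (show i < n by omega)] using this
  -- transported total sums and hinge sums
  have hXtr : ∀ h : ℝ → ℝ, ∑ j ∈ Finset.range n, (fun j => if hj : j < n
      then h (x (τ ⟨j, hj⟩)) else 0) j = ∑ i, h (x i) := by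
    intro h
    rw [dite_sum (fun i => h (x (τ i)))]
    exact Equiv.sum_comp τ (fun i => h (x i))
  have hYtr : ∀ h : ℝ → ℝ, ∑ j ∈ Finset.range n, (fun j => if hj : j < n
      then h (y (π ⟨j, hj⟩)) else 0) j = ∑ i, h (y i) := by
    intro h
    rw [dite_sum (fun i => h (y (π i)))]
    exact Equiv.sum_comp π (fun i => h (y i))
  -- partial sums
  have hpart : ∀ k, k ≤ n → ∑ j ∈ Finset.range k, X' j ≤ ∑ j ∈ Finset.range k, Y' j := by
    intro k hk
    rcases Nat.eq_zero_or_pos k with hk0 | hk0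
    · simp [hk0]
    have hkn : k - 1 < n := by omega
    set t := X' (k - 1) with ht
    have hx_le : ∀ j, j < k → X' j ≤ t := fun j hj => hXmono j (k - 1) (by omega) hkn
    have hx_ge : ∀ j, k ≤ j → j < n → t ≤ X' j := fun j hj hjn => hXmono (k - 1) j (by omega) hjn
    have e1 : ∑ j ∈ Finset.range n, max (t - X' j) 0 = ∑ j ∈ Finset.range k, (t - X' j) := by
      rw [← Finset.sum_range_add_sum_Ico _ hk]
      have ez : ∑ j ∈ Finset.Ico k n, max (t - X' j) 0 = 0 := by
        refine Finset.sum_eq_zero fun j hj => ?_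
        rw [Finset.mem_Ico] at hj
        exact max_eq_right (by linarith [hx_ge j hj.1 hj.2])
      rw [ez, add_zero]
      exact Finset.sum_congr rfl fun j hj => max_eq_left
        (by linarith [hx_le j (Finset.mem_range.mp hj)])
    have e2 : (k : ℝ) * t - ∑ j ∈ Finset.range n, max (t - X' j) 0
        = ∑ j ∈ Finset.range k, X' j := by
      rw [e1, Finset.sum_sub_distrib, Finset.sum_const, Finset.card_range, nsmul_eq_mul]
      ring
    have e3 : (k : ℝ) * t - ∑ j ∈ Finset.range n, max (t - Y' j) 0
        ≤ ∑ j ∈ Finset.range k, Y' j := by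
      have h1 : ∑ j ∈ Finset.range k, max (t - Y' j) 0
          ≤ ∑ j ∈ Finset.range n, max (t - Y' j) 0 :=
        Finset.sum_le_sum_of_subset_of_nonneg (Finset.range_subset_range.2 hk)
          (fun j _ _ => le_max_right _ _)
      have h2 : ∀ j, t - max (t - Y' j) 0 ≤ Y' j := fun j => by
        have := le_max_left (t - Y' j) 0; linarith
      calc (k : ℝ) * t - ∑ j ∈ Finset.range n, max (t - Y' j) 0
          ≤ (k : ℝ) * t - ∑ j ∈ Finset.range k, max (t - Y' j) 0 := by linarith
        _ = ∑ j ∈ Finset.range k, (t - max (t - Y' j) 0) := by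
            rw [Finset.sum_sub_distrib, Finset.sum_const, Finset.card_range, nsmul_eq_mul]
        _ ≤ ∑ j ∈ Finset.range k, Y' j := Finset.sum_le_sum fun j _ => h2 j
    have hmax : ∑ j ∈ Finset.range n, max (t - Y' j) 0
        ≤ ∑ j ∈ Finset.range n, max (t - X' j) 0 := by
      calc ∑ j ∈ Finset.range n, max (t - Y' j) 0
          = ∑ i, max (t - y i) 0 := by
            rw [← hYtr (fun s => max (t - s) 0)]
            exact Finset.sum_congr rfl fun j hj => by
              simp [hY', dif_pos (Finset.mem_range.mp hj)]
        _ ≤ ∑ i, max (t - x i) 0 := hpl t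
        _ = ∑ j ∈ Finset.range n, max (t - X' j) 0 := by
            rw [← hXtr (fun s => max (t - s) 0)]
            exact (Finset.sum_congr rfl fun j hj => by
              simp [hX', dif_pos (Finset.mem_range.mp hj)])
    linarith
  have htot : ∑ j ∈ Finset.range n, Y' j = ∑ j ∈ Finset.range n, X' j := by
    have h1 : ∑ j ∈ Finset.range n, Y' j = ∑ i, y (π i) := dite_sum (fun i => y (π i))
    have h2 : ∑ j ∈ Finset.range n, X' j = ∑ i, x (τ i) := dite_sum (fun i => x (τ i))
    rw [h1, h2, Equiv.sum_comp π y, Equiv.sum_comp τ x, hsum]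
  have habel := abel_le A' Y' X' hAmono hpart htot
  refine ⟨ρ.symm.trans τ, ?_⟩
  have hmono : Monovary (a ∘ ρ) (y ∘ π) := by
    intro i j hij
    have hle : i ≤ j := by
      by_contra hc
      push_neg at hc
      exact absurd (Tuple.monotone_sort y (le_of_lt hc)) (not_le.2 hij)
    exact Tuple.monotone_sort a hle
  have hre : ∑ i, a i * y i ≤ ∑ i, a (ρ i) * y (π i) := by
    have hstep := hmono.sum_smul_comp_perm_le_sum_smul (σ := ρ.trans π.symm)
    simp only [smul_eq_mul, Function.comp_apply, Equiv.trans_apply,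
      Equiv.apply_symm_apply] at hstep
    calc ∑ i, a i * y i = ∑ i, a (ρ i) * y (ρ i) :=
          (Equiv.sum_comp ρ (fun i => a i * y i)).symm
      _ ≤ ∑ i, a (ρ i) * y (π i) := hstep
  have hmid1 : ∑ i, a (ρ i) * y (π i) = ∑ j ∈ Finset.range n, A' j * Y' j := by
    rw [← dite_sum (fun i => a (ρ i) * y (π i))]
    exact Finset.sum_congr rfl fun j hj => by
      simp [hA', hY', dif_pos (Finset.mem_range.mp hj)]
  have hmid2 : ∑ j ∈ Finset.range n, A' j * X' j = ∑ i, a (ρ i) * x (τ i) := by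
    rw [← dite_sum (fun i => a (ρ i) * x (τ i))]
    exact Finset.sum_congr rfl fun j hj => by
      simp [hA', hX', dif_pos (Finset.mem_range.mp hj)]
  have hmid3 : ∑ i, a (ρ i) * x (τ i) = ∑ i, a i * x ((ρ.symm.trans τ) i) := by
    calc ∑ i, a (ρ i) * x (τ i)
        = ∑ i, a (ρ i) * x (τ (ρ.symm (ρ i))) :=
          Finset.sum_congr rfl fun i _ => by rw [Equiv.symm_apply_apply]
      _ = ∑ i, a i * x (τ (ρ.symm i)) :=
          Equiv.sum_comp ρ (fun i => a i * x (τ (ρ.symm i)))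
      _ = ∑ i, a i * x ((ρ.symm.trans τ) i) := rfl
  calc ∑ i, a i * y i ≤ ∑ i, a (ρ i) * y (π i) := hre
    _ = ∑ j ∈ Finset.range n, A' j * Y' j := hmid1
    _ ≤ ∑ j ∈ Finset.range n, A' j * X' j := habel
    _ = ∑ i, a (ρ i) * x (τ i) := hmid2
    _ = ∑ i, a i * x ((ρ.symm.trans τ) i) := hmid3

lemma mem_perm_hull {n : ℕ} (x y : Fin n → ℝ)
    (hsum : ∑ i, y i = ∑ i, x i)
    (hpl : ∀ t : ℝ, ∑ i, max (t - y i) 0 ≤ ∑ i, max (t - x i) 0) :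
    y ∈ convexHull ℝ (Set.range fun σ : Equiv.Perm (Fin n) => x ∘ σ) := by
  classical
  by_contra hy
  obtain ⟨f, s, hfy, hfK⟩ := geometric_hahn_banach_point_closed
    (convex_convexHull ℝ _) ((Set.finite_range _).isCompact_convexHull ℝ).isClosed hy
  set a : Fin n → ℝ := fun i => -(f (fun j => if i = j then (1 : ℝ) else 0)) with ha
  have hf_eq : ∀ w : Fin n → ℝ, f w = -∑ i, a i * w i := by
    intro w
    have hw : f w = ∑ i, w i * f (fun j => if i = j then (1 : ℝ) else 0) := by
      conv_lhs => rw [pi_eq_sum_univ w]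
      rw [map_sum]
      exact Finset.sum_congr rfl fun i _ => by rw [ContinuousLinearMap.map_smul, smul_eq_mul]
    rw [hw, ← Finset.sum_neg_distrib]
    exact Finset.sum_congr rfl fun i _ => by rw [ha]; ring
  obtain ⟨σ, hσ⟩ := dot_le_perm x y hsum hpl a
  have hxK : (x ∘ σ) ∈ convexHull ℝ (Set.range fun σ : Equiv.Perm (Fin n) => x ∘ σ) :=
    subset_convexHull ℝ _ ⟨σ, rfl⟩
  have h1 : s < f (x ∘ σ) := hfK _ hxK
  have h2 : f (x ∘ σ) = -∑ i, a i * x (σ i) := hf_eq (x ∘ σ)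
  have h3 : f y = -∑ i, a i * y i := hf_eq y
  linarith

lemma sum_g_eq_of_prod_eq {μ : ℕ} (c d : Fin μ → ℝ)
    (h : ∏ k, (X - C (c k)) = ∏ k, (X - C (d k))) (g : ℝ → ℝ) :
    ∑ k, g (c k) = ∑ k, g (d k) := by
  have h1 : ∀ e : Fin μ → ℝ, ∏ k, (X - C (e k))
      = ((Finset.univ.val.map e).map (fun r => X - C r)).prod := by
    intro e
    rw [Finset.prod_eq_multiset_prod, Multiset.map_map]
    rfl
  have hmul : Multiset.map c Finset.univ.val = Multiset.map d Finset.univ.val := by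
    have h2 := h
    rw [h1 c, h1 d] at h2
    have := congrArg Polynomial.roots h2
    rwa [Polynomial.roots_multiset_prod_X_sub_C, Polynomial.roots_multiset_prod_X_sub_C] at this
  calc ∑ k, g (c k) = ((Finset.univ.val.map c).map g).sum := by
        rw [Multiset.map_map]; rfl
    _ = ((Finset.univ.val.map d).map g).sum := by rw [hmul]
    _ = ∑ k, g (d k) := by rw [Multiset.map_map]; rfl

end SpecPre


/-- Differentiation preserves the spectral order: if the roots of `Q` are majorized by
those of `P`, then the roots of `n⁻¹Q'` are majorized by those of `n⁻¹P'`. -/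
theorem derivative_preserves_spectral_order
    (n : ℕ) (hn : 2 ≤ n) (x y : ℕ → ℝ)
    (P Q : Polynomial ℝ)
    (hP : P = ∏ i ∈ Finset.range n, (X - C (x i)))
    (hQ : Q = ∏ i ∈ Finset.range n, (X - C (y i)))
    (hmaj : MajorizedOn n y x) :
    ∃ u v : ℕ → ℝ,
      C (n : ℝ)⁻¹ * derivative P = ∏ i ∈ Finset.range (n - 1), (X - C (u i)) ∧
      C (n : ℝ)⁻¹ * derivative Q = ∏ i ∈ Finset.range (n - 1), (X - C (v i)) ∧
      MajorizedOn (n - 1) v u := by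
  classical
  obtain ⟨m, rfl⟩ : ∃ m, n = m + 1 := ⟨n - 1, by omega⟩
  have hm : 1 ≤ m := by omega
  set x' : Fin (m + 1) → ℝ := fun i => x i with hx'
  set y' : Fin (m + 1) → ℝ := fun i => y i with hy'
  set u : ℕ → ℝ := fun i => if h : i < m then SpecPre.eig x' ⟨i, h⟩ else 0 with hu
  set v : ℕ → ℝ := fun i => if h : i < m then SpecPre.eig y' ⟨i, h⟩ else 0 with hv
  have hcast : ((m : ℝ) + 1)⁻¹ = ((m + 1 : ℕ) : ℝ)⁻¹ := by push_cast; ring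
  have hmm : m + 1 - 1 = m := by omega
  have key : ∀ (w : ℕ → ℝ) (w' : Fin (m + 1) → ℝ) (uu : ℕ → ℝ), w' = (fun i : Fin (m + 1) => w ↑i) →
      uu = (fun i => if h : i < m then SpecPre.eig w' ⟨i, h⟩ else 0) →
      C ((m + 1 : ℕ) : ℝ)⁻¹ * derivative (∏ i ∈ Finset.range (m + 1), (X - C (w i)))
        = ∏ i ∈ Finset.range (m + 1 - 1), (X - C (uu i)) := by
    intro w w' uu hw' huu
    have hprodw : ∏ i ∈ Finset.range (m + 1), (X - C (w i)) = ∏ i, (X - C (w' i)) := by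
      rw [hw', ← Fin.prod_univ_eq_prod_range (fun i => X - C (w i)) (m + 1)]
    have hprodu : ∏ i ∈ Finset.range (m + 1 - 1), (X - C (uu i))
        = ∏ k : Fin m, (X - C (SpecPre.eig w' k)) := by
      rw [hmm, ← Fin.prod_univ_eq_prod_range (fun i => X - C (uu i)) m]
      exact Finset.prod_congr rfl fun k _ => by simp [huu, k.isLt]
    rw [hprodw, hprodu, ← hcast, ← SpecPre.star_poly hm w']
  refine ⟨u, v, ?_, ?_, ?_⟩
  · rw [hP]; exact key x x' u hx' hu
  · rw [hQ]; exact key y y' v hy' hv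
  · intro g hg
    -- convert sums
    have hvconv : ∑ i ∈ Finset.range (m + 1 - 1), g (v i) = ∑ k : Fin m, g (SpecPre.eig y' k) := by
      rw [hmm, ← Fin.sum_univ_eq_sum_range (fun i => g (v i)) m]
      exact Finset.sum_congr rfl fun k _ => by simp [hv, k.isLt]
    have huconv : ∑ i ∈ Finset.range (m + 1 - 1), g (u i) = ∑ k : Fin m, g (SpecPre.eig x' k) := by
      rw [hmm, ← Fin.sum_univ_eq_sum_range (fun i => g (u i)) m]
      exact Finset.sum_congr rfl fun k _ => by simp [hu, k.isLt]
    rw [hvconv, huconv]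
    -- derive hypotheses for the hull lemma
    have hneg : ConvexOn ℝ Set.univ (fun s : ℝ => -s) :=
      ⟨convex_univ, fun p _ q _ a b _ _ _ => le_of_eq (by simp only [smul_eq_mul]; ring)⟩
    have hid : ConvexOn ℝ Set.univ (fun s : ℝ => s) :=
      ⟨convex_univ, fun p _ q _ a b _ _ _ => le_of_eq (by simp only [smul_eq_mul])⟩
    have hs1 := hmaj (fun s => s) hid
    have hs2 := hmaj (fun s => -s) hneg
    have hsum : ∑ i, y' i = ∑ i, x' i := by
      rw [hx', hy', Fin.sum_univ_eq_sum_range (fun i => x i) (m + 1),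
        Fin.sum_univ_eq_sum_range (fun i => y i) (m + 1)]
      simp only [Finset.sum_neg_distrib, neg_le_neg_iff] at hs2
      linarith [hs1, hs2]
    have hpl : ∀ t : ℝ, ∑ i, max (t - y' i) 0 ≤ ∑ i, max (t - x' i) 0 := by
      intro t
      have := hmaj (fun s => max (t - s) 0) (SpecPre.convexOn_hinge t)
      rw [hx', hy', Fin.sum_univ_eq_sum_range (fun i => max (t - x i) 0) (m + 1),
        Fin.sum_univ_eq_sum_range (fun i => max (t - y i) 0) (m + 1)]
      exact this
    have hhull := SpecPre.mem_perm_hull x' y' hsum hpl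
    have hφ := SpecPre.eig_sum_convex (m := m) g hg
    obtain ⟨w, hwS, hle⟩ := hφ.exists_ge_of_mem_convexHull
      (fun _ _ => Set.mem_univ _) hhull
    obtain ⟨σ, rfl⟩ := hwS
    have hperm : ∏ k, (X - C (SpecPre.eig (x' ∘ σ) k)) = ∏ k, (X - C (SpecPre.eig x' k)) := by
      rw [SpecPre.star_poly hm (x' ∘ σ), SpecPre.star_poly hm x']
      congr 2
      exact Equiv.prod_comp σ (fun i => X - C (x' i))
    have heq := SpecPre.sum_g_eq_of_prod_eq _ _ hperm g
    calc ∑ k : Fin m, g (SpecPre.eig y' k) ≤ ∑ k : Fin m, g (SpecPre.eig (x' ∘ σ) k) := hle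
      _ = ∑ k : Fin m, g (SpecPre.eig x' k) := heq
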